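/- Let K : ℝ → ℝ be integrable with ∫ K(v) dv = 1 and 𝒦(u) := ∫_{-∞}^{u} K(v) dv, and suppose sup_{|v| ≥ c} |𝒦(v) − 1{v ≥ 0}| → 0 as c → ∞. Let β ∈ ℝ^{d+1}, h_n → 0, c_n → ∞ with c_n h_n → 0. Then for any bounded random vector W with an atomless distribution of β^T W, E[|𝒦(β^T W / h_n) − 1{β^T W ≥ 0}|] → 0 as n → ∞. -/

import Mathlib

open MeasureTheory Filter Set

theorem stmt_9 {Ω : Type*} [MeasureSpace Ω] (μ : Measure Ω) [IsProbabilityMeasure μ]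
    (d : ℕ) (W : Ω → Fin (d + 1) → ℝ) (hWmeas : Measurable W)
    (hWbdd : ∃ M : ℝ, ∀ ω i, |W ω i| ≤ M)
    (β : Fin (d + 1) → ℝ)
    (hatomless : ∀ t : ℝ, μ {ω | ∑ i, β i * W ω i = t} = 0)
    (K : ℝ → ℝ) (hK : Integrable K) (hK1 : ∫ v, K v = 1)
    (𝒦 : ℝ → ℝ) (h𝒦 : ∀ u, 𝒦 u = ∫ v in Iic u, K v)
    (htail : ∀ ε > 0, ∃ c : ℝ, ∀ v : ℝ, c ≤ |v| →
      |𝒦 v - (if 0 ≤ v then (1:ℝ) else 0)| ≤ ε)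
    (h c : ℕ → ℝ) (hpos : ∀ n, 0 < h n)
    (hh : Tendsto h atTop (nhds 0)) (hc : Tendsto c atTop atTop)
    (hch : Tendsto (fun n => c n * h n) atTop (nhds 0)) :
    Tendsto (fun n => ∫ ω, |𝒦 ((∑ i, β i * W ω i) / h n) -
        (if 0 ≤ ∑ i, β i * W ω i then (1:ℝ) else 0)| ∂μ) atTop (nhds 0) := by
  set X : Ω → ℝ := fun ω => ∑ i, β i * W ω i with hXdef
  have hXmeas : Measurable X := by
    apply Finset.measurable_sum
    intro i _
    exact measurable_const.mul ((measurable_pi_apply i).comp hWmeas)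
  set C : ℝ := (∫ v, |K v|) + 1 with hCdef
  have hInt0 : 0 ≤ ∫ v, |K v| := integral_nonneg fun v => abs_nonneg _
  have hCpos : (0:ℝ) < C := by rw [hCdef]; linarith
  have hBnd : ∀ u, |𝒦 u - (if 0 ≤ u then (1:ℝ) else 0)| ≤ C := by
    intro u
    have h1 : |𝒦 u| ≤ ∫ v, |K v| := by
      rw [h𝒦]
      calc |∫ v in Iic u, K v| ≤ ∫ v in Iic u, |K v| := by
            simpa [Real.norm_eq_abs] using
              norm_integral_le_integral_norm (μ := volume.restrict (Iic u)) K
        _ ≤ ∫ v, |K v| := setIntegral_le_integral hK.abs (ae_of_all _ fun v => abs_nonneg _)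
    have h2 : |(if 0 ≤ u then (1:ℝ) else 0)| ≤ 1 := by split <;> simp
    calc |𝒦 u - (if 0 ≤ u then (1:ℝ) else 0)|
        ≤ |𝒦 u| + |(if 0 ≤ u then (1:ℝ) else 0)| := abs_sub _ _
      _ ≤ C := by rw [hCdef]; linarith
  rw [NormedAddCommGroup.tendsto_nhds_zero]
  intro ε hε
  obtain ⟨c₀, hc₀⟩ := htail (ε/4) (by linarith)
  -- choose δ via atomlessness at 0
  set s : ℕ → Set Ω := fun k => {ω | |X ω| ≤ 1 / (k + 1)} with hsdef
  have hsmeas : ∀ k, MeasurableSet (s k) := fun k =>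
    measurableSet_le hXmeas.abs measurable_const
  have hanti : Antitone s := by
    intro k m hkm ω hω
    simp only [hsdef, mem_setOf_eq] at hω ⊢
    refine le_trans hω ?_
    apply one_div_le_one_div_of_le
    · positivity
    · exact_mod_cast by exact_mod_cast add_le_add_left (Nat.cast_le.mpr hkm) 1
  have hiInter : (⋂ k, s k) = {ω | X ω = 0} := by
    ext ω
    simp only [mem_iInter, hsdef, mem_setOf_eq]
    constructor
    · intro hω
      have : |X ω| ≤ 0 :=
        ge_of_tendsto' tendsto_one_div_add_atTop_nhds_zero_nat fun k => hω k
      have := abs_nonneg (X ω)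
      have : |X ω| = 0 := le_antisymm ‹|X ω| ≤ 0› ‹0 ≤ |X ω|›
      exact abs_eq_zero.mp this
    · intro hω k
      rw [hω]; simp; positivity
  have hmu0 : μ (⋂ k, s k) = 0 := by rw [hiInter]; exact hatomless 0
  have htend : Tendsto (fun k => μ (s k)) atTop (nhds 0) := by
    have := tendsto_measure_iInter_atTop (fun k => (hsmeas k).nullMeasurableSet) hanti
      ⟨0, measure_ne_top μ _⟩
    rwa [hmu0] at this
  have htendR : Tendsto (fun k => (μ (s k)).toReal) atTop (nhds 0) := by
    have := (ENNReal.tendsto_toReal (by simp)).comp htend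
    exact this
  have hevk : ∀ᶠ k in atTop, (μ (s k)).toReal < ε / (4 * C) := by
    have := htendR.eventually (gt_mem_nhds (show (0:ℝ) < ε / (4*C) by positivity))
    exact this
  obtain ⟨k₀, hk₀⟩ := hevk.exists
  set δ : ℝ := 1 / (k₀ + 1) with hδdef
  have hδpos : (0:ℝ) < δ := by positivity
  set A : Set Ω := s k₀ with hAdef
  have hAmeas : MeasurableSet A := hsmeas k₀
  -- eventual conditions on n
  have hev1 : ∀ᶠ n in atTop, c₀ ≤ c n := hc.eventually_ge_atTop c₀
  have hev2 : ∀ᶠ n in atTop, |c n * h n| < δ := by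
    have := Metric.tendsto_nhds.mp hch δ hδpos
    filter_upwards [this] with n hn
    simpa [Real.dist_eq, abs_mul] using hn
  filter_upwards [hev1, hev2] with n hn1 hn2
  set g : Ω → ℝ := fun ω => ε/4 + C * A.indicator (fun _ => (1:ℝ)) ω with hgdef
  have hgint : Integrable g μ :=
    (integrable_const _).add (((integrable_const (1:ℝ)).indicator hAmeas).const_mul C)
  have hiff : ∀ ω, (0 ≤ X ω / h n) ↔ (0 ≤ X ω) := by
    intro ω
    rw [le_div_iff₀ (hpos n), zero_mul]
  have hptw : ∀ ω, |𝒦 (X ω / h n) - (if 0 ≤ X ω then (1:ℝ) else 0)| ≤ g ω := by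
    intro ω
    have hrw : (if 0 ≤ X ω then (1:ℝ) else 0) = (if 0 ≤ X ω / h n then (1:ℝ) else 0) :=
      (if_congr (hiff ω) rfl rfl).symm
    rw [hrw]
    by_cases hω : |X ω| ≤ δ
    · have hmem : ω ∈ A := hω
      have : g ω = ε/4 + C := by
        simp [hgdef, indicator_of_mem hmem]
      rw [this]
      have := hBnd (X ω / h n)
      linarith
    · have hmem : ω ∉ A := hω
      have hg0 : g ω = ε/4 := by simp [hgdef, indicator_of_notMem hmem]
      rw [hg0]
      apply hc₀
      have h1 : c n * h n < |X ω| := by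
        calc c n * h n ≤ |c n * h n| := le_abs_self _
          _ < δ := hn2
          _ < |X ω| := lt_of_not_ge hω
      have h2 : c n < |X ω| / h n := (lt_div_iff₀ (hpos n)).mpr h1
      have h3 : |X ω / h n| = |X ω| / h n := by
        rw [abs_div, abs_of_pos (hpos n)]
      rw [h3]
      linarith
  have hle : ∫ ω, |𝒦 (X ω / h n) - (if 0 ≤ X ω then (1:ℝ) else 0)| ∂μ ≤ ∫ ω, g ω ∂μ :=
    integral_mono_of_nonneg (ae_of_all _ fun ω => abs_nonneg _) hgint (ae_of_all _ hptw)
  have hgval : ∫ ω, g ω ∂μ = ε/4 + C * (μ A).toReal := by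
    rw [hgdef]
    rw [integral_add (integrable_const _)
      (((integrable_const (1:ℝ)).indicator hAmeas).const_mul C)]
    rw [integral_const, probReal_univ, integral_const_mul C, integral_indicator_const _ hAmeas]
    simp [Measure.real]
  have hnonneg : 0 ≤ ∫ ω, |𝒦 (X ω / h n) - (if 0 ≤ X ω then (1:ℝ) else 0)| ∂μ :=
    integral_nonneg fun ω => abs_nonneg _
  have hCA : C * (μ A).toReal < ε/4 := by
    have := hk₀
    rw [lt_div_iff₀ (by positivity : (0:ℝ) < 4*C)] at this
    nlinarith
  rw [Real.norm_eq_abs, abs_of_nonneg hnonneg]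
  calc ∫ ω, |𝒦 (X ω / h n) - (if 0 ≤ X ω then (1:ℝ) else 0)| ∂μ
      ≤ ∫ ω, g ω ∂μ := hle
    _ = ε/4 + C * (μ A).toReal := hgval
    _ < ε := by linarith
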